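/- Assume equation (dkq) holds. Then for all t ∈ ℝ^g and all real ξ, η with ξ ≠ η and ξ, η ≠ 0: ∑_{k=1}^g η^k · ∂_k 𝐮(ξ) = (ξη/(2(ξ−η)))·(𝐮'(ξ)·(2 − 𝐮(η)) − 𝐮'(η)·(2 − 𝐮(ξ))), i.e. ∂(η)𝐮(ξ) = 𝓣_ξ^η ∂_x 𝐮(ξ) where ∂(η) = ∑_{k=1}^g η^k ∂_k and 𝓣_ξ^η is the generalized translation with h = 2 − 𝐮. -/

import Mathlib

open scoped BigOperators

/-- Partial derivative `∂_i` (1-based index) on functions of `t : Fin g → ℝ`;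
`∂_i ≡ 0` for `i = 0` or `i > g` (in particular `∂_{g+1} ≡ 0`). -/
noncomputable def pd {g : ℕ} {E : Type*} [NormedAddCommGroup E] [NormedSpace ℝ E]
    (i : ℕ) (f : (Fin g → ℝ) → E) : (Fin g → ℝ) → E :=
  fun t => if h : 1 ≤ i ∧ i ≤ g then
    fderiv ℝ f t (Pi.single (⟨i - 1, by omega⟩ : Fin g) 1) else 0

/-- The generating function `𝐮(ξ) = ∑_{i=1}^g u_i ξ^i`. -/
noncomputable def bfu {g : ℕ} (u : ℕ → (Fin g → ℝ) → ℝ) (ξ : ℝ) :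
    (Fin g → ℝ) → ℝ :=
  fun t => ∑ i ∈ Finset.Icc 1 g, u i t * ξ ^ i

/-- `𝐮'(ξ) = ∑_{i=1}^g u_i' ξ^i` (prime is `∂_x = ∂_1`). -/
noncomputable def bfu1 {g : ℕ} (u : ℕ → (Fin g → ℝ) → ℝ) (ξ : ℝ) :
    (Fin g → ℝ) → ℝ :=
  fun t => ∑ i ∈ Finset.Icc 1 g, pd 1 (u i) t * ξ ^ i

/-- `𝐮''(ξ) = ∑_{i=1}^g u_i'' ξ^i`. -/
noncomputable def bfu2 {g : ℕ} (u : ℕ → (Fin g → ℝ) → ℝ) (ξ : ℝ) :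
    (Fin g → ℝ) → ℝ :=
  fun t => ∑ i ∈ Finset.Icc 1 g, pd 1 (pd 1 (u i)) t * ξ ^ i

/-- `𝐮'''(ξ) = ∑_{i=1}^g u_i''' ξ^i`. -/
noncomputable def bfu3 {g : ℕ} (u : ℕ → (Fin g → ℝ) → ℝ) (ξ : ℝ) :
    (Fin g → ℝ) → ℝ :=
  fun t => ∑ i ∈ Finset.Icc 1 g, pd 1 (pd 1 (pd 1 (u i))) t * ξ ^ i

/-- `D_k(2 − 𝐮(ξ)) = (1/2)(2·ξ^{1−k} + ∑_{i=1}^{k−1} (−u_i) ξ^{i−k+1})`,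
the operator `D_k` applied to the Laurent-type polynomial `2 − 𝐮(ξ)`. -/
noncomputable def DkA {g : ℕ} (u : ℕ → (Fin g → ℝ) → ℝ) (k : ℕ) (ξ : ℝ) :
    (Fin g → ℝ) → ℝ :=
  fun t => (1/2 : ℝ) * (2 * ξ ^ (1 - (k:ℤ))
    + ∑ i ∈ Finset.Icc 1 (k-1), (-(u i t)) * ξ ^ ((i:ℤ) - (k:ℤ) + 1))

/-- `D_k(𝐮'(ξ)) = (1/2)∑_{i=1}^{k−1} u_i' ξ^{i−k+1}`. -/
noncomputable def DkB {g : ℕ} (u : ℕ → (Fin g → ℝ) → ℝ) (k : ℕ) (ξ : ℝ) :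
    (Fin g → ℝ) → ℝ :=
  fun t => (1/2 : ℝ) * ∑ i ∈ Finset.Icc 1 (k-1), pd 1 (u i) t * ξ ^ ((i:ℤ) - (k:ℤ) + 1)

lemma telesc (ξ η : ℝ) (hξ : ξ ≠ 0) (m n : ℕ) (hmn : m ≤ n) :
    (ξ - η) * ∑ k ∈ Finset.Icc (m+1) n, η ^ k * ξ ^ ((m:ℤ) - (k:ℤ) + 1)
      = η ^ (m+1) * ξ - η ^ (n+1) * ξ ^ ((m:ℤ) - (n:ℤ) + 1) := by
  induction n, hmn using Nat.le_induction with
  | base =>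
    have : Finset.Icc (m+1) m = ∅ := Finset.Icc_eq_empty_of_lt (Nat.lt_succ_self m)
    simp [this]
  | succ n hmn ih =>
    rw [Finset.sum_Icc_succ_top (by omega)]
    have h1 : ((m:ℤ) - ((n+1:ℕ):ℤ) + 1) = (m:ℤ) - n := by push_cast; ring
    have h2 : ξ ^ ((m:ℤ) - (n:ℤ) + 1) = ξ ^ ((m:ℤ) - (n:ℤ)) * ξ := zpow_add_one₀ hξ _
    rw [h1]
    linear_combination ih - η^(n+1) * h2

lemma keysum (ξ η : ℝ) (hξ : ξ ≠ 0) (g : ℕ) (c : ℕ → ℝ) :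
    (ξ - η) * ∑ k ∈ Finset.Icc 1 g, η ^ k * ∑ i ∈ Finset.Icc 1 (k - 1), c i * ξ ^ ((i:ℤ) - (k:ℤ) + 1)
      = ξ * η * (∑ i ∈ Finset.Icc 1 g, c i * η ^ i)
        - η ^ (g + 1) * ξ ^ ((1:ℤ) - (g:ℤ)) * (∑ i ∈ Finset.Icc 1 g, c i * ξ ^ i) := by
  have swap : ∑ k ∈ Finset.Icc 1 g, η ^ k * ∑ i ∈ Finset.Icc 1 (k - 1), c i * ξ ^ ((i:ℤ) - (k:ℤ) + 1)
      = ∑ i ∈ Finset.Icc 1 g, c i * ∑ k ∈ Finset.Icc (i+1) g, η ^ k * ξ ^ ((i:ℤ) - (k:ℤ) + 1) := by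
    simp only [Finset.mul_sum]
    rw [Finset.sum_comm' (s := Finset.Icc 1 g) (t := fun k => Finset.Icc 1 (k-1))
      (t' := Finset.Icc 1 g) (s' := fun i => Finset.Icc (i+1) g)
      (by intro k i; simp only [Finset.mem_Icc]; omega)]
    exact Finset.sum_congr rfl fun i _ => Finset.sum_congr rfl fun k _ => by ring
  rw [swap, Finset.mul_sum, Finset.mul_sum, Finset.mul_sum, ← Finset.sum_sub_distrib]
  refine Finset.sum_congr rfl fun i hi => ?_
  have hig : i ≤ g := (Finset.mem_Icc.mp hi).2
  have ht := telesc ξ η hξ i g hig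
  have hz : ξ ^ ((i:ℤ) - (g:ℤ) + 1) = ξ ^ ((1:ℤ) - (g:ℤ)) * ξ ^ i := by
    rw [← zpow_natCast ξ i, ← zpow_add₀ hξ]; ring_nf
  calc (ξ - η) * (c i * ∑ k ∈ Finset.Icc (i+1) g, η ^ k * ξ ^ ((i:ℤ) - (k:ℤ) + 1))
      = c i * ((ξ - η) * ∑ k ∈ Finset.Icc (i+1) g, η ^ k * ξ ^ ((i:ℤ) - (k:ℤ) + 1)) := by ring
    _ = c i * (η ^ (i+1) * ξ - η ^ (g+1) * ξ ^ ((i:ℤ) - (g:ℤ) + 1)) := by rw [ht]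
    _ = ξ * η * (c i * η ^ i) - η ^ (g+1) * ξ ^ ((1:ℤ) - (g:ℤ)) * (c i * ξ ^ i) := by
        rw [hz]; ring


/-- Assume equation (dkq). Then for all `t` and all real `ξ ≠ η`
with `ξ, η ≠ 0`:
`∑_{k=1}^g η^k·∂_k 𝐮(ξ) = (ξη/(2(ξ−η)))·(𝐮'(ξ)(2 − 𝐮(η)) − 𝐮'(η)(2 − 𝐮(ξ)))`,
i.e. `∂(η)𝐮(ξ) = 𝓣_ξ^η ∂_x 𝐮(ξ)` where `∂(η) = ∑ η^k ∂_k` and `𝓣_ξ^η` is the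
generalized translation with `h = 2 − 𝐮`. -/
theorem statement16 (g : ℕ) (hg : 1 ≤ g) (u : ℕ → (Fin g → ℝ) → ℝ)
    (hu : ∀ i, ContDiff ℝ (⊤ : ℕ∞) (u i))
    (hdkq : ∀ k, 1 ≤ k → k ≤ g → ∀ t, ∀ ξ : ℝ, ξ ≠ 0 →
      pd k (bfu u ξ) t = DkA u k ξ t * bfu1 u ξ t - DkB u k ξ t * (2 - bfu u ξ t)) :
    ∀ t, ∀ ξ η : ℝ, ξ ≠ 0 → η ≠ 0 → ξ ≠ η →
      ∑ k ∈ Finset.Icc 1 g, η ^ k * pd k (bfu u ξ) t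
        = ξ * η / (2 * (ξ - η))
          * (bfu1 u ξ t * (2 - bfu u η t) - bfu1 u η t * (2 - bfu u ξ t)) := by
  intro t ξ η hξ hη hne
  have hsub : ξ - η ≠ 0 := sub_ne_zero.mpr hne
  have h2 : (2 : ℝ) * (ξ - η) ≠ 0 := mul_ne_zero two_ne_zero hsub
  have hsum : ∑ k ∈ Finset.Icc 1 g, η ^ k * pd k (bfu u ξ) t
      = ∑ k ∈ Finset.Icc 1 g, η ^ k * (DkA u k ξ t * bfu1 u ξ t - DkB u k ξ t * (2 - bfu u ξ t)) := by
    refine Finset.sum_congr rfl fun k hk => ?_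
    obtain ⟨h1k, hkg⟩ := Finset.mem_Icc.mp hk
    rw [hdkq k h1k hkg t ξ hξ]
  rw [hsum, div_mul_eq_mul_div, eq_div_iff h2]
  have split : ∑ k ∈ Finset.Icc 1 g, η ^ k * (DkA u k ξ t * bfu1 u ξ t - DkB u k ξ t * (2 - bfu u ξ t))
      = (∑ k ∈ Finset.Icc 1 g, η ^ k * DkA u k ξ t) * bfu1 u ξ t
        - (∑ k ∈ Finset.Icc 1 g, η ^ k * DkB u k ξ t) * (2 - bfu u ξ t) := by
    rw [Finset.sum_mul, Finset.sum_mul, ← Finset.sum_sub_distrib]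
    exact Finset.sum_congr rfl fun k _ => by ring
  rw [split]
  have hA : 2 * (ξ - η) * (∑ k ∈ Finset.Icc 1 g, η ^ k * DkA u k ξ t)
      = ξ * η * (2 - bfu u η t) - η ^ (g+1) * ξ ^ ((1:ℤ) - (g:ℤ)) * (2 - bfu u ξ t) := by
    simp only [DkA]
    have e1 : ∑ k ∈ Finset.Icc 1 g, η ^ k * ((1/2 : ℝ) * (2 * ξ ^ (1 - (k:ℤ))
        + ∑ i ∈ Finset.Icc 1 (k-1), (-(u i t)) * ξ ^ ((i:ℤ) - (k:ℤ) + 1)))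
        = (∑ k ∈ Finset.Icc 1 g, η ^ k * ξ ^ ((0:ℤ) - (k:ℤ) + 1))
          + (1/2 : ℝ) * ∑ k ∈ Finset.Icc 1 g, η ^ k * ∑ i ∈ Finset.Icc 1 (k-1), (-(u i t)) * ξ ^ ((i:ℤ) - (k:ℤ) + 1) := by
      rw [Finset.mul_sum, ← Finset.sum_add_distrib]
      refine Finset.sum_congr rfl fun k _ => ?_
      have : (0:ℤ) - (k:ℤ) + 1 = 1 - (k:ℤ) := by ring
      rw [this]; ring
    rw [e1]
    have t1 := telesc ξ η hξ 0 g (Nat.zero_le g)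
    push_cast at t1 ⊢
    have t2 := keysum ξ η hξ g (fun i => -(u i t))
    have hbη : ∑ i ∈ Finset.Icc 1 g, (fun i => -(u i t)) i * η ^ i = -(bfu u η t) := by
      simp [bfu, Finset.sum_neg_distrib]
    have hbξ : ∑ i ∈ Finset.Icc 1 g, (fun i => -(u i t)) i * ξ ^ i = -(bfu u ξ t) := by
      simp [bfu, Finset.sum_neg_distrib]
    rw [hbη, hbξ] at t2
    have hz : ξ ^ ((0:ℤ) - (g:ℤ) + 1) = ξ ^ ((1:ℤ) - (g:ℤ)) := by ring_nf
    rw [hz] at t1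
    linear_combination 2 * t1 + t2
  have hB : 2 * (ξ - η) * (∑ k ∈ Finset.Icc 1 g, η ^ k * DkB u k ξ t)
      = ξ * η * bfu1 u η t - η ^ (g+1) * ξ ^ ((1:ℤ) - (g:ℤ)) * bfu1 u ξ t := by
    simp only [DkB]
    have e1 : ∑ k ∈ Finset.Icc 1 g, η ^ k * ((1/2 : ℝ) * ∑ i ∈ Finset.Icc 1 (k-1), pd 1 (u i) t * ξ ^ ((i:ℤ) - (k:ℤ) + 1))
        = (1/2 : ℝ) * ∑ k ∈ Finset.Icc 1 g, η ^ k * ∑ i ∈ Finset.Icc 1 (k-1), pd 1 (u i) t * ξ ^ ((i:ℤ) - (k:ℤ) + 1) := by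
      rw [Finset.mul_sum]
      exact Finset.sum_congr rfl fun k _ => by ring
    rw [e1]
    have t2 := keysum ξ η hξ g (fun i => pd 1 (u i) t)
    have hbη : ∑ i ∈ Finset.Icc 1 g, (fun i => pd 1 (u i) t) i * η ^ i = bfu1 u η t := rfl
    have hbξ : ∑ i ∈ Finset.Icc 1 g, (fun i => pd 1 (u i) t) i * ξ ^ i = bfu1 u ξ t := rfl
    rw [hbη, hbξ] at t2
    linear_combination t2
  linear_combination (bfu1 u ξ t) * hA - (2 - bfu u ξ t) * hB
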